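/- arXiv:2311.08833 — 2 statements merged into one kernel-verified Lean document; each statement's English description precedes it below -/
import Mathlib

section
/- Let N be even and x, y ∈ ℝ^N with x ≠ ±y. Define, for an N × N real matrix A with rows w₁,…,w_N, the map P(x;A) = (⟨x,w₁⟩², ⟨x,w₂⟩², ⟨x,w₃⟩² + ⟨x,w₄⟩², …, ⟨x,w_{N-1}⟩² + ⟨x,w_N⟩²). Then the set {A ∈ ℝ^{N×N} : P(x;A) = P(y;A)} has dimension at most N² - (N/2 + 1). -/
open scoped ENNReal
open Set Module

section SmCov

variable {E F : Type*}
  [NormedAddCommGroup E] [NormedSpace ℝ E] [FiniteDimensional ℝ E]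
  [NormedAddCommGroup F] [NormedSpace ℝ F] [FiniteDimensional ℝ F]

set_option linter.unusedSectionVars false

/-- `s` is covered by countably many `C¹` images of `ℝ^d`. -/
def SmCov (d : ℕ) (s : Set E) : Prop :=
  ∃ f : ℕ → (Fin d → ℝ) → E, (∀ n, ContDiff ℝ 1 (f n)) ∧ s ⊆ ⋃ n, Set.range (f n)

theorem SmCov.dimH_le {d : ℕ} {s : Set E} (h : SmCov d s) : dimH s ≤ d := by
  obtain ⟨f, hf, hs⟩ := h
  refine (dimH_mono hs).trans ?_
  rw [dimH_iUnion]
  refine iSup_le fun n => ((hf n).dimH_range_le).trans ?_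
  simp

theorem SmCov.mono {d : ℕ} {s t : Set E} (hst : s ⊆ t) (h : SmCov d t) : SmCov d s := by
  obtain ⟨f, hf, hs⟩ := h
  exact ⟨f, hf, hst.trans hs⟩

theorem LinearMap.contDiff' (φ : E →ₗ[ℝ] F) : ContDiff ℝ 1 (φ : E → F) := by
  have := (LinearMap.toContinuousLinearMap φ).contDiff (n := 1)
  simpa using this

theorem SmCov.mono_dim {d d' : ℕ} {s : Set E} (hd : d ≤ d') (h : SmCov d s) : SmCov d' s := by
  classical
  obtain ⟨f, hf, hs⟩ := h
  refine ⟨fun n q => f n (q ∘ Fin.castLE hd), fun n => (hf n).comp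
    ((LinearMap.funLeft ℝ ℝ (Fin.castLE hd)).contDiff'), ?_⟩
  intro x hx
  obtain ⟨n, hn⟩ := mem_iUnion.1 (hs hx)
  obtain ⟨p, hp⟩ := hn
  refine mem_iUnion.2 ⟨n, ⟨fun i => if h : (i : ℕ) < d then p ⟨i, h⟩ else 0, ?_⟩⟩
  convert hp using 2
  funext i
  simp [Fin.castLE]

theorem SmCov.union {d : ℕ} {s t : Set E} (h1 : SmCov d s) (h2 : SmCov d t) :
    SmCov d (s ∪ t) := by
  classical
  obtain ⟨f1, hf1, hs1⟩ := h1
  obtain ⟨f2, hf2, hs2⟩ := h2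
  refine ⟨fun n => if n % 2 = 0 then f1 (n / 2) else f2 (n / 2), fun n => ?_, ?_⟩
  · dsimp only; split <;> [exact hf1 _; exact hf2 _]
  · rintro x (hx | hx)
    · obtain ⟨n, p, hp⟩ := mem_iUnion.1 (hs1 hx)
      refine mem_iUnion.2 ⟨2 * n, p, ?_⟩
      show (if (2 * n) % 2 = 0 then f1 (2 * n / 2) else f2 (2 * n / 2)) p = x
      rw [if_pos (by omega), (by omega : 2 * n / 2 = n)]; exact hp
    · obtain ⟨n, p, hp⟩ := mem_iUnion.1 (hs2 hx)
      refine mem_iUnion.2 ⟨2 * n + 1, p, ?_⟩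
      show (if (2 * n + 1) % 2 = 0 then f1 _ else f2 ((2 * n + 1) / 2)) p = x
      rw [if_neg (by omega), (by omega : (2 * n + 1) / 2 = n)]; exact hp

theorem smcov_singleton (d : ℕ) (x : E) : SmCov d ({x} : Set E) := by
  refine ⟨fun _ _ => x, fun n => contDiff_const, ?_⟩
  rintro y rfl
  exact mem_iUnion.2 ⟨0, ⟨fun _ => 0, rfl⟩⟩

end SmCov
section Part2

variable {E F : Type*}
  [NormedAddCommGroup E] [NormedSpace ℝ E] [FiniteDimensional ℝ E]
  [NormedAddCommGroup F] [NormedSpace ℝ F] [FiniteDimensional ℝ F]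

theorem SmCov.prod {d₁ d₂ : ℕ} {s : Set E} {t : Set F} (h1 : SmCov d₁ s) (h2 : SmCov d₂ t) :
    SmCov (d₁ + d₂) (s ×ˢ t) := by
  obtain ⟨f1, hf1, hs1⟩ := h1
  obtain ⟨f2, hf2, hs2⟩ := h2
  refine ⟨fun n q => (f1 n.unpair.1 (q ∘ Fin.castAdd d₂), f2 n.unpair.2 (q ∘ Fin.natAdd d₁)),
    fun n => ContDiff.prodMk
      ((hf1 _).comp (LinearMap.funLeft ℝ ℝ (Fin.castAdd d₂)).contDiff')
      ((hf2 _).comp (LinearMap.funLeft ℝ ℝ (Fin.natAdd d₁)).contDiff'), ?_⟩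
  rintro ⟨x1, x2⟩ ⟨hx1, hx2⟩
  obtain ⟨n1, p1, hp1⟩ := Set.mem_iUnion.1 (hs1 hx1)
  obtain ⟨n2, p2, hp2⟩ := Set.mem_iUnion.1 (hs2 hx2)
  refine Set.mem_iUnion.2 ⟨Nat.pair n1 n2, Fin.append p1 p2, ?_⟩
  have e1 : (Fin.append p1 p2 ∘ Fin.castAdd d₂ : Fin d₁ → ℝ) = p1 := by
    funext i; exact Fin.append_left p1 p2 i
  have e2 : (Fin.append p1 p2 ∘ Fin.natAdd d₁ : Fin d₂ → ℝ) = p2 := by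
    funext i; exact Fin.append_right p1 p2 i
  simp only [Nat.unpair_pair, e1, e2, hp1, hp2]

theorem SmCov.preimage (φ : E →ₗ[ℝ] F) {d : ℕ} {t : Set F} (h : SmCov d t) :
    SmCov (d + Module.finrank ℝ (LinearMap.ker φ)) (φ ⁻¹' t) := by
  classical
  obtain ⟨f, hf, ht⟩ := h
  set m := Module.finrank ℝ (LinearMap.ker φ) with hm
  -- pseudo-inverse R of φ
  obtain ⟨q, hq⟩ := (LinearMap.range φ).exists_isCompl
  obtain ⟨g, hg⟩ := φ.rangeRestrict.exists_rightInverse_of_surjective φ.range_rangeRestrict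
  set R : F →ₗ[ℝ] E := g ∘ₗ (LinearMap.range φ).projectionOnto q hq with hR
  have hRφ : ∀ x : E, φ (R (φ x)) = φ x := by
    intro x
    have h1 : ((LinearMap.range φ).projectionOnto q hq) (φ x)
        = ⟨φ x, LinearMap.mem_range_self φ x⟩ := by
      have := Submodule.linearProjOfIsCompl_apply_left hq (⟨φ x, LinearMap.mem_range_self φ x⟩ :
        LinearMap.range φ)
      simpa using this
    have h2 : ∀ z : LinearMap.range φ, φ (g z) = (z : F) := by
      intro z
      have := congrArg (fun (u : LinearMap.range φ) => (u : F)) (LinearMap.congr_fun hg z)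
      simpa [LinearMap.rangeRestrict] using this
    simp [hR, h1, h2]
  -- parametrization of the kernel
  set bK := Module.finBasis ℝ (LinearMap.ker φ)
  set j : (Fin m → ℝ) →ₗ[ℝ] E := (LinearMap.ker φ).subtype ∘ₗ (bK.equivFun.symm : _ ≃ₗ[ℝ] _).toLinearMap with hj
  have hjker : ∀ k : E, k ∈ LinearMap.ker φ → ∃ p : Fin m → ℝ, j p = k := by
    intro k hk
    refine ⟨bK.equivFun ⟨k, hk⟩, ?_⟩
    simp only [hj, LinearMap.coe_comp, Function.comp_apply, LinearEquiv.coe_coe]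
    rw [LinearEquiv.symm_apply_apply]
    rfl
  refine ⟨fun n q => R (f n (q ∘ Fin.castAdd m)) + j (q ∘ Fin.natAdd d), fun n => ?_, ?_⟩
  · exact ((R.contDiff').comp ((hf n).comp (LinearMap.funLeft ℝ ℝ (Fin.castAdd m)).contDiff')).add
      ((j.contDiff').comp (LinearMap.funLeft ℝ ℝ (Fin.natAdd d)).contDiff')
  · intro x hx
    obtain ⟨n, p, hp⟩ := Set.mem_iUnion.1 (ht hx)
    have hker : x - R (φ x) ∈ LinearMap.ker φ := by
      simp [LinearMap.mem_ker, map_sub, hRφ x]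
    obtain ⟨p2, hp2⟩ := hjker _ hker
    refine Set.mem_iUnion.2 ⟨n, Fin.append p p2, ?_⟩
    have e1 : (Fin.append p p2 ∘ Fin.castAdd m : Fin d → ℝ) = p := by
      funext i; exact Fin.append_left p p2 i
    have e2 : (Fin.append p p2 ∘ Fin.natAdd d : Fin m → ℝ) = p2 := by
      funext i; exact Fin.append_right p p2 i
    show R (f n (Fin.append p p2 ∘ Fin.castAdd m)) + j (Fin.append p p2 ∘ Fin.natAdd d) = x
    rw [e1, e2, hp, hp2]
    abel

theorem smcov_pi {n : ℕ} (t : Fin n → Set F) (d : Fin n → ℕ)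
    (h : ∀ i, SmCov (d i) (t i)) : SmCov (∑ i, d i) (Set.univ.pi t) := by
  induction n with
  | zero =>
      refine SmCov.mono ?_ (smcov_singleton _ ((fun i => i.elim0) : Fin 0 → F))
      intro x _
      exact Set.mem_singleton_iff.2 (funext fun i => i.elim0)
  | succ m ih =>
      set φc : (Fin (m + 1) → F) →ₗ[ℝ] F × (Fin m → F) :=
        (LinearMap.proj 0).prod (LinearMap.funLeft ℝ F Fin.succ) with hφc
      have hker : LinearMap.ker φc = ⊥ := by
        rw [LinearMap.ker_eq_bot]
        intro a b hab
        have h0 : a 0 = b 0 := congrArg Prod.fst hab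
        have hs : ∀ i : Fin m, a i.succ = b i.succ := fun i =>
          congrFun (congrArg Prod.snd hab) i
        funext i
        refine Fin.cases h0 hs i
      have hsub : Set.univ.pi t ⊆ φc ⁻¹' ((t 0) ×ˢ (Set.univ.pi fun i => t i.succ)) := by
        intro x hx
        exact ⟨hx 0 trivial, fun i _ => hx i.succ trivial⟩
      have hsm := ((h 0).prod (ih _ _ fun i => h i.succ)).preimage φc
      refine SmCov.mono_dim ?_ (SmCov.mono hsub hsm)
      rw [hker, finrank_bot, Fin.sum_univ_succ]
      omega

end Part2
section Part3

/-- The linear functional `w ↦ ∑ j, u j * w j`. -/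
def dotL {N : ℕ} (u : Fin N → ℝ) : (Fin N → ℝ) →ₗ[ℝ] ℝ where
  toFun w := ∑ j, u j * w j
  map_add' a b := by
    simp only [Pi.add_apply, mul_add, Finset.sum_add_distrib]
  map_smul' c w := by
    simp only [Pi.smul_apply, smul_eq_mul, RingHom.id_apply, Finset.mul_sum]
    exact Finset.sum_congr rfl fun j _ => by ring

theorem dotL_apply {N : ℕ} (u w : Fin N → ℝ) : dotL u w = ∑ j, u j * w j := rfl

theorem dotL_comm {N : ℕ} (u v : Fin N → ℝ) : dotL u v = dotL v u := by
  simp [dotL_apply, mul_comm]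

theorem dotL_self_pos {N : ℕ} {u : Fin N → ℝ} (hu : u ≠ 0) : 0 < dotL u u := by
  have : ∃ j, u j ≠ 0 := by
    by_contra h
    push_neg at h
    exact hu (funext fun j => h j)
  obtain ⟨j0, hj0⟩ := this
  refine Finset.sum_pos' (fun j _ => mul_self_nonneg _) ⟨j0, Finset.mem_univ _, ?_⟩
  exact mul_self_pos.2 hj0

/-- The quadric cone `{p : p 0 * p 1 + p 2 * p 3 = 0}` is covered by two `C¹` images of `ℝ³`. -/
theorem smcov_Z : SmCov 3 {p : Fin 4 → ℝ | p 0 * p 1 + p 2 * p 3 = 0} := by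
  classical
  have ev : ∀ i : Fin 3, ContDiff ℝ 1 (fun q : Fin 3 → ℝ => q i) := fun i =>
    (ContinuousLinearMap.proj (R := ℝ) (φ := fun _ : Fin 3 => ℝ) i).contDiff
  set f1 : (Fin 3 → ℝ) → (Fin 4 → ℝ) := fun q => ![q 0, q 2 * q 1, q 1, -(q 2 * q 0)] with hf1
  set f2 : (Fin 3 → ℝ) → (Fin 4 → ℝ) := fun q => ![-(q 2 * q 0), q 1, q 2 * q 1, q 0] with hf2
  have hc1 : ContDiff ℝ 1 f1 := by
    rw [hf1]
    apply contDiff_pi.2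
    intro i
    fin_cases i <;> simp <;>
      [exact ev 0; exact (ev 2).mul (ev 1); exact ev 1; exact ((ev 2).mul (ev 0)).neg]
  have hc2 : ContDiff ℝ 1 f2 := by
    rw [hf2]
    apply contDiff_pi.2
    intro i
    fin_cases i <;> simp <;>
      [exact ((ev 2).mul (ev 0)).neg; exact ev 1; exact (ev 2).mul (ev 1); exact ev 0]
  refine ⟨fun n => if n = 0 then f1 else f2, fun n => by dsimp only; split <;> assumption, ?_⟩
  intro p hp
  simp only [Set.mem_setOf_eq] at hp
  by_cases h0 : p 0 ≠ 0
  · refine Set.mem_iUnion.2 ⟨0, ![p 0, p 2, -(p 3) / p 0], ?_⟩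
    show f1 _ = p
    funext i
    fin_cases i <;> simp [hf1]
    · field_simp
      linear_combination -hp
    · field_simp
  push_neg at h0
  by_cases h2 : p 2 ≠ 0
  · refine Set.mem_iUnion.2 ⟨0, ![0, p 2, p 1 / p 2], ?_⟩
    have h3 : p 3 = 0 := by
      rcases mul_eq_zero.1 (show p 2 * p 3 = 0 by simpa [h0] using hp) with h | h
      · exact absurd h h2
      · exact h
    show f1 _ = p
    funext i
    fin_cases i <;> simp [hf1, h0, h3]
    field_simp
  push_neg at h2
  refine Set.mem_iUnion.2 ⟨1, ![p 3, p 1, 0], ?_⟩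
  show f2 _ = p
  funext i
  fin_cases i <;> simp [hf2, h0, h2]

end Part3
set_option maxHeartbeats 4000000 in
/-- For `N` even and `x ≠ ±y` in `ℝ^N`, the set of `N × N` matrices `A`
(with rows `A 0, …, A (N-1)`) such that `P(x;A) = P(y;A)`, where
`P(x;A) = (⟪x,w₁⟫², ⟪x,w₂⟫², ⟪x,w₃⟫² + ⟪x,w₄⟫², …, ⟪x,w_{N-1}⟫² + ⟪x,w_N⟫²)`,
has dimension at most `N² - (N/2 + 1)`. -/
theorem stmt2 {N : ℕ} (hN : Even N) (x y : Fin N → ℝ) (hxy : x ≠ y) (hxy' : x ≠ -y) :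
    dimH {A : Fin N → Fin N → ℝ |
        (∀ h0 : 0 < N, (∑ j, x j * A ⟨0, h0⟩ j) ^ 2 = (∑ j, y j * A ⟨0, h0⟩ j) ^ 2) ∧
        (∀ h1 : 1 < N, (∑ j, x j * A ⟨1, h1⟩ j) ^ 2 = (∑ j, y j * A ⟨1, h1⟩ j) ^ 2) ∧
        ∀ k : ℕ, 1 ≤ k → ∀ h : 2 * k + 1 < N,
          (∑ j, x j * A ⟨2 * k, by omega⟩ j) ^ 2 + (∑ j, x j * A ⟨2 * k + 1, h⟩ j) ^ 2 =
          (∑ j, y j * A ⟨2 * k, by omega⟩ j) ^ 2 + (∑ j, y j * A ⟨2 * k + 1, h⟩ j) ^ 2} ≤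
      ((N ^ 2 - (N / 2 + 1) : ℕ) : ℝ≥0∞) := by
  classical
  obtain ⟨M, hM⟩ := hN
  rcases Nat.eq_zero_or_pos N with hN0 | hNpos
  · exact absurd (funext fun j : Fin N => absurd j.isLt (by omega)) hxy
  have hN2 : 2 ≤ N := by omega
  have h1N : 1 < N := by omega
  set u : Fin N → ℝ := fun j => x j - y j with hu_def
  set v : Fin N → ℝ := fun j => x j + y j with hv_def
  have hu : u ≠ 0 := by
    intro h
    refine hxy (funext fun j => ?_)
    have := congrFun h j
    simp only [hu_def, Pi.zero_apply] at this
    linarith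
  have hv : v ≠ 0 := by
    intro h
    refine hxy' (funext fun j => ?_)
    have := congrFun h j
    simp only [hv_def, Pi.zero_apply] at this
    simp only [Pi.neg_apply]
    linarith
  have hkey : ∀ w : Fin N → ℝ, (∑ j, x j * w j) ^ 2 - (∑ j, y j * w j) ^ 2
      = dotL u w * dotL v w := by
    intro w
    have h1 : dotL u w = (∑ j, x j * w j) - (∑ j, y j * w j) := by
      simp [dotL_apply, hu_def, sub_mul, Finset.sum_sub_distrib]
    have h2 : dotL v w = (∑ j, x j * w j) + (∑ j, y j * w j) := by
      simp [dotL_apply, hv_def, add_mul, Finset.sum_add_distrib]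
    rw [h1, h2]; ring
  have hvv := dotL_self_pos hv
  suffices hS : SmCov (N ^ 2 - (N / 2 + 1)) {A : Fin N → Fin N → ℝ |
        (∀ h0 : 0 < N, (∑ j, x j * A ⟨0, h0⟩ j) ^ 2 = (∑ j, y j * A ⟨0, h0⟩ j) ^ 2) ∧
        (∀ h1 : 1 < N, (∑ j, x j * A ⟨1, h1⟩ j) ^ 2 = (∑ j, y j * A ⟨1, h1⟩ j) ^ 2) ∧
        ∀ k : ℕ, 1 ≤ k → ∀ h : 2 * k + 1 < N,
          (∑ j, x j * A ⟨2 * k, by omega⟩ j) ^ 2 + (∑ j, x j * A ⟨2 * k + 1, h⟩ j) ^ 2 =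
          (∑ j, y j * A ⟨2 * k, by omega⟩ j) ^ 2 + (∑ j, y j * A ⟨2 * k + 1, h⟩ j) ^ 2} by
    exact hS.dimH_le
  by_cases hdep : ∃ c : ℝ, u = c • v
  · -- degenerate case : u is a multiple of v; all conditions force `dotL v (A i) = 0`
    obtain ⟨c, hc⟩ := hdep
    have hc0 : c ≠ 0 := by
      rintro rfl
      rw [zero_smul] at hc
      exact hu hc
    have hlu : ∀ w, dotL u w = c * dotL v w := by
      intro w
      rw [hc]
      simp only [dotL_apply, Pi.smul_apply, smul_eq_mul, Finset.mul_sum]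
      exact Finset.sum_congr rfl fun j _ => by ring
    set Ψ : (Fin N → Fin N → ℝ) →ₗ[ℝ] (Fin N → ℝ) :=
      LinearMap.pi (fun i => (dotL v).comp (LinearMap.proj i)) with hΨ
    have hΨapp : ∀ A i, Ψ A i = dotL v (A i) := fun A i => rfl
    have hsurj : Function.Surjective Ψ := by
      intro b
      refine ⟨fun i => (b i / dotL v v) • v, funext fun i => ?_⟩
      rw [hΨapp, map_smul, smul_eq_mul]
      have hS : (∑ j, v j * v j) ≠ 0 := hvv.ne'
      show b i / (∑ j, v j * v j) * ∑ j, v j * v j = b i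
      exact div_mul_cancel₀ (b i) hS
    have hsub : {A : Fin N → Fin N → ℝ |
        (∀ h0 : 0 < N, (∑ j, x j * A ⟨0, h0⟩ j) ^ 2 = (∑ j, y j * A ⟨0, h0⟩ j) ^ 2) ∧
        (∀ h1 : 1 < N, (∑ j, x j * A ⟨1, h1⟩ j) ^ 2 = (∑ j, y j * A ⟨1, h1⟩ j) ^ 2) ∧
        ∀ k : ℕ, 1 ≤ k → ∀ h : 2 * k + 1 < N,
          (∑ j, x j * A ⟨2 * k, by omega⟩ j) ^ 2 + (∑ j, x j * A ⟨2 * k + 1, h⟩ j) ^ 2 =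
          (∑ j, y j * A ⟨2 * k, by omega⟩ j) ^ 2 + (∑ j, y j * A ⟨2 * k + 1, h⟩ j) ^ 2}
        ⊆ Ψ ⁻¹' {0} := by
      intro A hA
      obtain ⟨h0c, h1c, hpc⟩ := hA
      have sq0 : ∀ w : Fin N → ℝ, dotL u w * dotL v w = 0 → dotL v w = 0 := by
        intro w hz
        rw [hlu w] at hz
        rcases mul_eq_zero.1 hz with h | h
        · rcases mul_eq_zero.1 h with h' | h'
          · exact absurd h' hc0
          · exact h'
        · exact h
      have key0 : dotL v (A ⟨0, hNpos⟩) = 0 := by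
        refine sq0 _ ?_
        rw [← hkey, h0c hNpos]; ring
      have key1 : dotL v (A ⟨1, h1N⟩) = 0 := by
        refine sq0 _ ?_
        rw [← hkey, h1c h1N]; ring
      have keyp : ∀ k, 1 ≤ k → ∀ h : 2 * k + 1 < N,
          dotL v (A ⟨2 * k, by omega⟩) = 0 ∧ dotL v (A ⟨2 * k + 1, h⟩) = 0 := by
        intro k hk h
        have e := hpc k hk h
        have k1 := hkey (A ⟨2 * k, by omega⟩)
        have k2 := hkey (A ⟨2 * k + 1, h⟩)
        have hz : dotL u (A ⟨2 * k, by omega⟩) * dotL v (A ⟨2 * k, by omega⟩)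
            + dotL u (A ⟨2 * k + 1, h⟩) * dotL v (A ⟨2 * k + 1, h⟩) = 0 := by
          linarith
        rw [hlu, hlu] at hz
        have hsq : dotL v (A ⟨2 * k, by omega⟩) ^ 2 + dotL v (A ⟨2 * k + 1, h⟩) ^ 2 = 0 := by
          have hcz : c * (dotL v (A ⟨2 * k, by omega⟩) ^ 2
              + dotL v (A ⟨2 * k + 1, h⟩) ^ 2) = 0 := by linear_combination hz
          rcases mul_eq_zero.1 hcz with h' | h'
          · exact absurd h' hc0
          · exact h'
        constructor
        · nlinarith [sq_nonneg (dotL v (A ⟨2 * k, by omega⟩)),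
            sq_nonneg (dotL v (A ⟨2 * k + 1, h⟩))]
        · nlinarith [sq_nonneg (dotL v (A ⟨2 * k, by omega⟩)),
            sq_nonneg (dotL v (A ⟨2 * k + 1, h⟩))]
      show Ψ A ∈ ({0} : Set (Fin N → ℝ))
      rw [Set.mem_singleton_iff]
      funext i
      rw [hΨapp]
      show dotL v (A i) = 0
      by_cases hi0 : (i : ℕ) = 0
      · have e : i = ⟨0, hNpos⟩ := Fin.ext hi0
        rw [e]; exact key0
      by_cases hi1 : (i : ℕ) = 1
      · have e : i = ⟨1, h1N⟩ := Fin.ext hi1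
        rw [e]; exact key1
      · set k := (i : ℕ) / 2 with hk
        have hk1 : 1 ≤ k := by omega
        have hlt : 2 * k + 1 < N := by have := i.isLt; omega
        obtain ⟨ha, hb⟩ := keyp k hk1 hlt
        have hpar : (i : ℕ) = 2 * k ∨ (i : ℕ) = 2 * k + 1 := by omega
        rcases hpar with h | h
        · have e : i = ⟨2 * k, by omega⟩ := Fin.ext h
          rw [e]; exact ha
        · have e : i = ⟨2 * k + 1, hlt⟩ := Fin.ext h
          rw [e]; exact hb
    have hsm := (smcov_singleton 0 (0 : Fin N → ℝ)).preimage Ψ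
    refine SmCov.mono_dim ?_ (SmCov.mono hsub hsm)
    have hrn := LinearMap.finrank_range_add_finrank_ker Ψ
    rw [LinearMap.range_eq_top.2 hsurj, finrank_top] at hrn
    have hfin1 : Module.finrank ℝ (Fin N → ℝ) = N := by simp
    have hfin2 : Module.finrank ℝ (Fin N → Fin N → ℝ) = N * N := by
      rw [Module.finrank_pi_fintype ℝ]
      simp [Finset.sum_const, Fintype.card_fin, mul_comm]
    rw [hfin1, hfin2] at hrn
    rw [pow_two]
    generalize hQ : N * N = Q at hrn ⊢
    omega
  · -- independent case
    have hu0 : u ≠ 0 := hu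
    have hdet : dotL u u * dotL v v - dotL u v * dotL u v ≠ 0 := by
      intro hD
      set t0 : ℝ := -(dotL u v) / dotL v v with ht0
      have hexp : ∑ j, (u j + t0 * v j) ^ 2
          = dotL u u + 2 * t0 * dotL u v + t0 ^ 2 * dotL v v := by
        simp only [dotL_apply, Finset.mul_sum]
        rw [← Finset.sum_add_distrib, ← Finset.sum_add_distrib]
        exact Finset.sum_congr rfl fun j _ => by ring
      have hz : ∑ j, (u j + t0 * v j) ^ 2 = 0 := by
        rw [hexp, ht0]
        have hS : dotL v v ≠ 0 := hvv.ne'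
        field_simp
        linear_combination hD
      have hall : ∀ j, u j + t0 * v j = 0 := by
        intro j
        have hnn : ∀ j ∈ Finset.univ, (0:ℝ) ≤ (u j + t0 * v j) ^ 2 := fun j _ => sq_nonneg _
        have := (Finset.sum_eq_zero_iff_of_nonneg hnn).1 hz j (Finset.mem_univ j)
        exact pow_eq_zero_iff two_ne_zero |>.1 this
      refine hdep ⟨-t0, funext fun j => ?_⟩
      have := hall j
      simp only [Pi.smul_apply, smul_eq_mul]
      linarith
    have hsolve : ∀ a b : ℝ, ∃ w : Fin N → ℝ, dotL u w = a ∧ dotL v w = b := by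
      intro a b
      set D := dotL u u * dotL v v - dotL u v * dotL u v with hD
      refine ⟨((a * dotL v v - b * dotL u v) / D) • u + ((b * dotL u u - a * dotL u v) / D) • v,
        ?_, ?_⟩
      · rw [map_add, map_smul, map_smul, smul_eq_mul, smul_eq_mul]
        field_simp
        rw [hD]
        ring
      · rw [map_add, map_smul, map_smul, smul_eq_mul, smul_eq_mul,
          show dotL v u = dotL u v from (dotL_comm u v).symm]
        field_simp
        rw [hD]
        ring
    -- the hyperplane pieces
    have smallHyp : ∀ z : Fin N → ℝ, z ≠ 0 → SmCov (N - 1) {w : Fin N → ℝ | dotL z w = 0} := by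
      intro z hz
      have hsm := (smcov_singleton 0 (0 : ℝ)).preimage (dotL z)
      refine SmCov.mono_dim ?_ (SmCov.mono ?_ hsm)
      · have hkerlt : LinearMap.ker (dotL z) < ⊤ := by
          rw [lt_top_iff_ne_top]
          intro hT
          have hmem : z ∈ LinearMap.ker (dotL z) := by rw [hT]; trivial
          have : dotL z z = 0 := hmem
          exact absurd this (dotL_self_pos hz).ne'
        have hlt := Submodule.finrank_lt (K := ℝ) (V := Fin N → ℝ) hkerlt.ne
        have hfin : Module.finrank ℝ (Fin N → ℝ) = N := by simp
        omega
      · intro w hw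
        exact Set.mem_preimage.2 (Set.mem_singleton_iff.2 hw)
    set W1 : Set (Fin N → ℝ) := {w | dotL u w = 0} ∪ {w | dotL v w = 0} with hW1
    have smallW1 : SmCov (N - 1) W1 := (smallHyp u hu0).union (smallHyp v hv)
    -- the quadric pieces
    set lmat : Fin 4 → (((Fin N → ℝ) × (Fin N → ℝ)) →ₗ[ℝ] ℝ) := fun i =>
      if (i : ℕ) = 0 then (dotL u).comp (LinearMap.fst ℝ _ _)
      else if (i : ℕ) = 1 then (dotL v).comp (LinearMap.fst ℝ _ _)
      else if (i : ℕ) = 2 then (dotL u).comp (LinearMap.snd ℝ _ _)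
      else (dotL v).comp (LinearMap.snd ℝ _ _) with hlmat
    set Φ : ((Fin N → ℝ) × (Fin N → ℝ)) →ₗ[ℝ] (Fin 4 → ℝ) := LinearMap.pi lmat with hΦ
    have hΦ0 : ∀ p, Φ p 0 = dotL u p.1 := by intro p; simp [hΦ, hlmat]
    have hΦ1 : ∀ p, Φ p 1 = dotL v p.1 := by intro p; simp [hΦ, hlmat]
    have hΦ2 : ∀ p, Φ p 2 = dotL u p.2 := by intro p; simp [hΦ, hlmat]
    have hΦ3 : ∀ p, Φ p 3 = dotL v p.2 := by
      intro p
      show lmat 3 p = dotL v p.2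
      simp only [hlmat]
      rw [if_neg (by decide), if_neg (by decide), if_neg (by decide)]
      rfl
    set W2 : Set ((Fin N → ℝ) × (Fin N → ℝ)) :=
      Φ ⁻¹' {p : Fin 4 → ℝ | p 0 * p 1 + p 2 * p 3 = 0} with hW2
    have hsurjΦ : Function.Surjective Φ := by
      intro p
      obtain ⟨w, hw1, hw2⟩ := hsolve (p 0) (p 1)
      obtain ⟨w', hw1', hw2'⟩ := hsolve (p 2) (p 3)
      refine ⟨(w, w'), funext fun i => ?_⟩
      have h4 : (i : ℕ) = 0 ∨ (i : ℕ) = 1 ∨ (i : ℕ) = 2 ∨ (i : ℕ) = 3 := by omega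
      rcases h4 with h | h | h | h
      · have e : i = 0 := Fin.ext h
        rw [e, hΦ0]; exact hw1
      · have e : i = 1 := Fin.ext h
        rw [e, hΦ1]; exact hw2
      · have e : i = 2 := Fin.ext h
        rw [e, hΦ2]; exact hw1'
      · have e : i = 3 := Fin.ext h
        rw [e, hΦ3]; exact hw2'
    have hrnΦ := LinearMap.finrank_range_add_finrank_ker Φ
    rw [LinearMap.range_eq_top.2 hsurjΦ, finrank_top] at hrnΦ
    have hfin4 : Module.finrank ℝ (Fin 4 → ℝ) = 4 := by simp
    have hfinP : Module.finrank ℝ ((Fin N → ℝ) × (Fin N → ℝ)) = N + N := by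
      rw [Module.finrank_prod]
      simp
    rw [hfin4, hfinP] at hrnΦ
    have smallW2 : SmCov (3 + (N + N - 4)) W2 := by
      have := smcov_Z.preimage Φ
      exact SmCov.mono_dim (by omega) this
    -- assembling over the rows
    set i1 : Fin M → Fin N := fun g => ⟨2 * (g : ℕ), by have := g.isLt; omega⟩ with hi1
    set i2 : Fin M → Fin N := fun g => ⟨2 * (g : ℕ) + 1, by have := g.isLt; omega⟩ with hi2
    set π : (Fin N → Fin N → ℝ) →ₗ[ℝ] (Fin M → (Fin N → ℝ) × (Fin N → ℝ)) :=
      LinearMap.pi (fun g => (LinearMap.proj (i1 g)).prod (LinearMap.proj (i2 g))) with hπ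
    have hπapp : ∀ A g, π A g = (A (i1 g), A (i2 g)) := fun A g => rfl
    have hkerπ : LinearMap.ker π = ⊥ := by
      rw [LinearMap.ker_eq_bot']
      intro A hA
      funext i
      have hg : (i : ℕ) / 2 < M := by have := i.isLt; omega
      have hAg := congrFun hA ⟨(i : ℕ) / 2, hg⟩
      rw [hπapp] at hAg
      have h1 : A (i1 ⟨(i : ℕ) / 2, hg⟩) = 0 := congrArg Prod.fst hAg
      have h2 : A (i2 ⟨(i : ℕ) / 2, hg⟩) = 0 := congrArg Prod.snd hAg
      have hpar : (i : ℕ) = 2 * ((i : ℕ) / 2) ∨ (i : ℕ) = 2 * ((i : ℕ) / 2) + 1 := by omega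
      rcases hpar with h | h
      · have e : i = i1 ⟨(i : ℕ) / 2, hg⟩ := Fin.ext (by show (i : ℕ) = 2 * ((i : ℕ) / 2); omega)
        rw [e]; exact h1
      · have e : i = i2 ⟨(i : ℕ) / 2, hg⟩ :=
          Fin.ext (by show (i : ℕ) = 2 * ((i : ℕ) / 2) + 1; omega)
        rw [e]; exact h2
    set tset : Fin M → Set ((Fin N → ℝ) × (Fin N → ℝ)) :=
      fun g => if (g : ℕ) = 0 then W1 ×ˢ W1 else W2 with htset
    set dd : Fin M → ℕ := fun g => if (g : ℕ) = 0 then (N - 1) + (N - 1) else 3 + (N + N - 4)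
      with hdd
    have hsmt : ∀ g, SmCov (dd g) (tset g) := by
      intro g
      by_cases hg : (g : ℕ) = 0
      · simp only [htset, hdd, hg, if_pos]
        exact smallW1.prod smallW1
      · simp only [htset, hdd, if_neg hg]
        exact smallW2
    have hsubS : {A : Fin N → Fin N → ℝ |
        (∀ h0 : 0 < N, (∑ j, x j * A ⟨0, h0⟩ j) ^ 2 = (∑ j, y j * A ⟨0, h0⟩ j) ^ 2) ∧
        (∀ h1 : 1 < N, (∑ j, x j * A ⟨1, h1⟩ j) ^ 2 = (∑ j, y j * A ⟨1, h1⟩ j) ^ 2) ∧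
        ∀ k : ℕ, 1 ≤ k → ∀ h : 2 * k + 1 < N,
          (∑ j, x j * A ⟨2 * k, by omega⟩ j) ^ 2 + (∑ j, x j * A ⟨2 * k + 1, h⟩ j) ^ 2 =
          (∑ j, y j * A ⟨2 * k, by omega⟩ j) ^ 2 + (∑ j, y j * A ⟨2 * k + 1, h⟩ j) ^ 2}
        ⊆ π ⁻¹' (Set.univ.pi tset) := by
      intro A hA
      obtain ⟨h0c, h1c, hpc⟩ := hA
      intro g _
      rw [hπapp]
      by_cases hg : (g : ℕ) = 0
      · rw [htset]
        simp only [hg, if_pos]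
        have e1 : i1 g = ⟨0, hNpos⟩ := Fin.ext (by show 2 * (g : ℕ) = 0; omega)
        have e2 : i2 g = ⟨1, h1N⟩ := Fin.ext (by show 2 * (g : ℕ) + 1 = 1; omega)
        rw [e1, e2]
        constructor
        · have hz : dotL u (A ⟨0, hNpos⟩) * dotL v (A ⟨0, hNpos⟩) = 0 := by
            rw [← hkey, h0c hNpos]; ring
          exact mul_eq_zero.1 hz
        · have hz : dotL u (A ⟨1, h1N⟩) * dotL v (A ⟨1, h1N⟩) = 0 := by
            rw [← hkey, h1c h1N]; ring
          exact mul_eq_zero.1 hz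
      · rw [htset]
        simp only [if_neg hg]
        set k := (g : ℕ) with hkdef
        have hk1 : 1 ≤ k := by omega
        have hlt : 2 * k + 1 < N := by have := g.isLt; omega
        have e1 : i1 g = ⟨2 * k, by omega⟩ := Fin.ext (by show 2 * (g : ℕ) = 2 * k; rw [hkdef])
        have e2 : i2 g = ⟨2 * k + 1, hlt⟩ :=
          Fin.ext (by show 2 * (g : ℕ) + 1 = 2 * k + 1; rw [hkdef])
        rw [e1, e2, hW2, Set.mem_preimage, Set.mem_setOf_eq, hΦ0, hΦ1, hΦ2, hΦ3]
        have e := hpc k hk1 hlt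
        have k1 := hkey (A ⟨2 * k, by omega⟩)
        have k2 := hkey (A ⟨2 * k + 1, hlt⟩)
        dsimp only
        linarith
    have hpi := smcov_pi tset dd hsmt
    have hpre := hpi.preimage π
    refine SmCov.mono_dim ?_ (SmCov.mono hsubS hpre)
    rw [hkerπ, finrank_bot]
    obtain ⟨M', rfl⟩ : ∃ M', M = M' + 1 := ⟨M - 1, by omega⟩
    have hterm : ∀ g : Fin M', dd g.succ = 3 + (N + N - 4) := by
      intro g
      simp [hdd, Fin.val_succ]
    have hsum : (∑ g : Fin (M' + 1), dd g) = ((N - 1) + (N - 1)) + M' * (3 + (N + N - 4)) := by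
      rw [Fin.sum_univ_succ]
      have h0 : dd 0 = (N - 1) + (N - 1) := by simp [hdd]
      have hs : (∑ g : Fin M', dd g.succ) = M' * (3 + (N + N - 4)) := by
        rw [Finset.sum_congr rfl fun g _ => hterm g, Finset.sum_const, Finset.card_univ,
          Fintype.card_fin, smul_eq_mul]
      rw [h0, hs]
    rw [hsum, pow_two]
    have e2 : N * N = 4 * (M' * M') + 8 * M' + 4 := by rw [hM]; ring
    have e3 : M' * (3 + (N + N - 4)) = 4 * (M' * M') + 3 * M' := by
      have h4 : N + N - 4 = 4 * M' := by omega
      rw [h4]; ring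
    generalize hP : M' * M' = P at e2 e3
    generalize hQ : N * N = Q at e2 ⊢
    omega
end

section
/- Let N be odd and x, y ∈ ℝ^N with x ≠ ±y. Define, for an N × N real matrix A with rows w₁,…,w_N, the map P(x;A) = (⟨x,w₁⟩², ⟨x,w₂⟩² + ⟨x,w₃⟩², …, ⟨x,w_{N-1}⟩² + ⟨x,w_N⟩²). Then the set {A ∈ ℝ^{N×N} : P(x;A) = P(y;A)} has dimension at most N² - (N+1)/2. -/
open scoped ENNReal
open Set MeasureTheory Module Matrix

section general
variable {E F : Type*} [NormedAddCommGroup E] [NormedSpace ℝ E]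
  [NormedAddCommGroup F] [NormedSpace ℝ F]

/-- dimH of image of a C¹ map. -/
lemma dimH_image_le_of_contDiff [SecondCountableTopology E] {f : E → F} (hf : ContDiff ℝ 1 f)
    (s : Set E) : dimH (f '' s) ≤ dimH s := by
  apply dimH_image_le_of_locally_lipschitzOn
  intro z _
  obtain ⟨K, t, ht, hK⟩ := hf.contDiffAt.exists_lipschitzOnWith
  exact ⟨K, t, nhdsWithin_le_nhds ht, hK⟩

/-- dimH of a submodule is at most its finrank. -/
lemma dimH_submodule_le [FiniteDimensional ℝ E] (V : Submodule ℝ E) :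
    dimH (V : Set E) ≤ (finrank ℝ V : ℝ≥0∞) := by
  have h1 : Isometry ((↑) : V → E) := isometry_subtype_coe
  have h2 : (V : Set E) = ((↑) : V → E) '' univ := by
    simp [image_univ, Subtype.range_coe]
  rw [h2, h1.dimH_image, Real.dimH_univ_eq_finrank]

/-- dimH of the kernel of a surjective linear map onto `Fin n → ℝ`. -/
lemma dimH_ker_le [FiniteDimensional ℝ E] {n : ℕ} (L : E →ₗ[ℝ] (Fin n → ℝ))
    (hL : Function.Surjective L) :
    dimH ((LinearMap.ker L : Submodule ℝ E) : Set E) ≤ ((finrank ℝ E - n : ℕ) : ℝ≥0∞) := by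
  refine (dimH_submodule_le _).trans ?_
  have h := LinearMap.finrank_range_add_finrank_ker L
  rw [LinearMap.range_eq_top.2 hL, finrank_top] at h
  have : finrank ℝ (Fin n → ℝ) = n := by simp
  have : finrank ℝ (LinearMap.ker L) = finrank ℝ E - n := by omega
  rw [this]

end general

section rows
variable {N n : ℕ}

/-- the linear functional `w ↦ u ⬝ᵥ w`. -/
noncomputable def dotl (u : Fin N → ℝ) : (Fin N → ℝ) →ₗ[ℝ] ℝ where
  toFun w := u ⬝ᵥ w
  map_add' a b := dotProduct_add u a b
  map_smul' c a := by simp [dotProduct_smul, smul_eq_mul]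

@[simp] lemma dotl_apply (u w : Fin N → ℝ) : dotl u w = u ⬝ᵥ w := rfl

/-- the linear map collecting `c i ⬝ᵥ A (ρ i)`. -/
noncomputable def rowL (c : Fin n → Fin N → ℝ) (ρ : Fin n → Fin N) :
    (Fin N → Fin N → ℝ) →ₗ[ℝ] (Fin n → ℝ) :=
  LinearMap.pi fun i => (dotl (c i)).comp (LinearMap.proj (ρ i))

@[simp] lemma rowL_apply (c : Fin n → Fin N → ℝ) (ρ : Fin n → Fin N)
    (A : Fin N → Fin N → ℝ) (i : Fin n) : rowL c ρ A i = c i ⬝ᵥ A (ρ i) := rfl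

lemma rowL_surjective {c : Fin n → Fin N → ℝ} {ρ : Fin n → Fin N}
    (hc : ∀ i, c i ≠ 0) (hρ : Function.Injective ρ) :
    Function.Surjective (rowL c ρ) := by
  intro t
  refine ⟨fun r j => ∑ i, if ρ i = r then (t i / (c i ⬝ᵥ c i)) * c i j else 0, ?_⟩
  funext i
  have hci : c i ⬝ᵥ c i ≠ 0 := by
    simpa [dotProduct_self_eq_zero] using hc i
  rw [rowL_apply]
  show (∑ j, c i j * ∑ i', (if ρ i' = ρ i then (t i' / (c i' ⬝ᵥ c i')) * c i' j else 0)) = t i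
  have h1 : ∀ j, c i j * ∑ i', (if ρ i' = ρ i then (t i' / (c i' ⬝ᵥ c i')) * c i' j else 0)
      = c i j * ((t i / (c i ⬝ᵥ c i)) * c i j) := by
    intro j
    congr 1
    rw [Finset.sum_eq_single i (fun i' _ hne => if_neg (fun h => hne (hρ h))) (by simp),
      if_pos rfl]
  simp_rw [h1]
  have h2 : ∑ j, c i j * (t i / (c i ⬝ᵥ c i) * c i j)
      = (t i / (c i ⬝ᵥ c i)) * (c i ⬝ᵥ c i) := by
    unfold dotProduct
    rw [Finset.mul_sum]
    congr 1; ext j; ring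
  rw [h2, div_mul_cancel₀ _ hci]
end rows

section gmap
variable {N : ℕ}

/-- partner row in a pair. -/
def partner (hN : N % 2 = 1) (r : Fin N) : Fin N :=
  ⟨if r.val % 2 = 1 then r.val + 1 else r.val - 1, by
    have := r.isLt; split <;> omega⟩

/-- chart maps. -/
noncomputable def Gmap (hN : N % 2 = 1) (u v e : Fin N → ℝ) (c : ℕ → Fin 3)
    (B : Fin N → Fin N → ℝ) : Fin N → Fin N → ℝ :=
  fun r =>
    if r.val = 0 then B r
    else if c ((r.val - 1) / 2) = 2 then B r
    else if ((r.val % 2 = 1) ↔ (c ((r.val - 1) / 2) = 0)) then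
      B r + ((u ⬝ᵥ B r) * (v ⬝ᵥ B (partner hN r) - 1)) • e
    else
      B r - ((u ⬝ᵥ B r) + (u ⬝ᵥ B (partner hN r)) * (v ⬝ᵥ B (partner hN r))) • e

variable {hN : N % 2 = 1} {u v e : Fin N → ℝ} {c : ℕ → Fin 3} {B : Fin N → Fin N → ℝ}

lemma partner_eq {k : ℕ} {r1 r2 : Fin N} (hr1 : r1.val = 2*k+1) (hr2 : r2.val = 2*k+2) :
    partner hN r1 = r2 ∧ partner hN r2 = r1 := by
  constructor <;> apply Fin.ext <;>
    show (if _ % 2 = 1 then _ + 1 else _ - 1) = _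
  · rw [if_pos (by omega)]; omega
  · rw [if_neg (by omega)]; omega

lemma Gmap_zero {r : Fin N} (hr : r.val = 0) : Gmap hN u v e c B r = B r := by
  unfold Gmap; rw [if_pos hr]

lemma Gmap_pair {k : ℕ} {r1 r2 : Fin N} (hr1 : r1.val = 2*k+1) (hr2 : r2.val = 2*k+2) :
    (c k = 0 → Gmap hN u v e c B r1 = B r1 + ((u ⬝ᵥ B r1) * (v ⬝ᵥ B r2 - 1)) • e ∧
        Gmap hN u v e c B r2 = B r2 - ((u ⬝ᵥ B r2) + (u ⬝ᵥ B r1) * (v ⬝ᵥ B r1)) • e) ∧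
    (c k = 1 → Gmap hN u v e c B r1 = B r1 - ((u ⬝ᵥ B r1) + (u ⬝ᵥ B r2) * (v ⬝ᵥ B r2)) • e ∧
        Gmap hN u v e c B r2 = B r2 + ((u ⬝ᵥ B r2) * (v ⬝ᵥ B r1 - 1)) • e) ∧
    (c k = 2 → Gmap hN u v e c B r1 = B r1 ∧ Gmap hN u v e c B r2 = B r2) := by
  obtain ⟨hp1, hp2⟩ := partner_eq (hN := hN) hr1 hr2
  have hd1 : (r1.val - 1) / 2 = k := by omega
  have hd2 : (r2.val - 1) / 2 = k := by omega
  have h01 : ¬(r1.val = 0) := by omega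
  have h02 : ¬(r2.val = 0) := by omega
  have hodd1 : r1.val % 2 = 1 := by omega
  have heven2 : ¬(r2.val % 2 = 1) := by omega
  refine ⟨fun hc => ⟨?_, ?_⟩, fun hc => ⟨?_, ?_⟩, fun hc => ⟨?_, ?_⟩⟩ <;>
    unfold Gmap
  · rw [if_neg h01, hd1, hc, if_neg (show (0:Fin 3) ≠ 2 by decide),
      if_pos (iff_of_true hodd1 rfl), hp1]
  · rw [if_neg h02, hd2, hc, if_neg (show (0:Fin 3) ≠ 2 by decide),
      if_neg (show ¬(r2.val % 2 = 1 ↔ (0:Fin 3) = 0) from fun hh => heven2 (hh.mpr rfl)), hp2]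
  · rw [if_neg h01, hd1, hc, if_neg (show (1:Fin 3) ≠ 2 by decide),
      if_neg (show ¬(r1.val % 2 = 1 ↔ (1:Fin 3) = 0) from
        fun hh => (show (1:Fin 3) ≠ 0 by decide) (hh.mp hodd1)), hp1]
  · rw [if_neg h02, hd2, hc, if_neg (show (1:Fin 3) ≠ 2 by decide),
      if_pos (iff_of_false heven2 (show ¬(1:Fin 3) = 0 by decide)), hp2]
  · rw [if_neg h01, hd1, hc, if_pos rfl]
  · rw [if_neg h02, hd2, hc, if_pos rfl]

lemma contDiff_Gmap : ContDiff ℝ 1 (Gmap hN u v e c) := by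
  rw [contDiff_pi]
  intro r
  have hrow : ∀ (s : Fin N), ContDiff ℝ 1 (fun B : Fin N → Fin N → ℝ => B s) :=
    fun s => contDiff_apply ℝ (Fin N → ℝ) s
  have hdot : ∀ (w : Fin N → ℝ) (s : Fin N),
      ContDiff ℝ 1 (fun B : Fin N → Fin N → ℝ => w ⬝ᵥ B s) := by
    intro w s
    show ContDiff ℝ 1 (fun B : Fin N → Fin N → ℝ => ∑ j, w j * B s j)
    exact ContDiff.sum fun j _ => contDiff_const.mul (contDiff_apply_apply ℝ ℝ s j)
  unfold Gmap
  split_ifs with h1 h2 h3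
  · exact hrow r
  · exact hrow r
  · exact (hrow r).add ((((hdot u r).mul ((hdot v _).sub contDiff_const))).smul contDiff_const)
  · exact (hrow r).sub ((((hdot u r).add ((hdot u _).mul (hdot v _)))).smul contDiff_const)

/-- per-pair covering lemma. -/
lemma pair_cover (u v e : Fin N → ℝ) (he1 : u ⬝ᵥ e = 1) (he2 : v ⬝ᵥ e = 0)
    (w w' : Fin N → ℝ) (h : (u ⬝ᵥ w) * (v ⬝ᵥ w) + (u ⬝ᵥ w') * (v ⬝ᵥ w') = 0) :
    ∃ ch : Fin 3, ∃ b b' : Fin N → ℝ,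
      (ch = 0 → u ⬝ᵥ b' = 0 ∧ b + ((u ⬝ᵥ b) * (v ⬝ᵥ b' - 1)) • e = w ∧
        b' - ((u ⬝ᵥ b') + (u ⬝ᵥ b) * (v ⬝ᵥ b)) • e = w') ∧
      (ch = 1 → u ⬝ᵥ b = 0 ∧ b - ((u ⬝ᵥ b) + (u ⬝ᵥ b') * (v ⬝ᵥ b')) • e = w ∧
        b' + ((u ⬝ᵥ b') * (v ⬝ᵥ b - 1)) • e = w') ∧
      (ch = 2 → v ⬝ᵥ b = 0 ∧ b = w ∧ b' = w') := by
  by_cases hp : v ⬝ᵥ w' ≠ 0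
  · refine ⟨0, w + ((u ⬝ᵥ w)/(v ⬝ᵥ w') - u ⬝ᵥ w) • e, w' - (u ⬝ᵥ w') • e,
      fun _ => ?_, fun h1 => absurd h1 (by decide), fun h2 => absurd h2 (by decide)⟩
    have d1 : u ⬝ᵥ (w + ((u ⬝ᵥ w)/(v ⬝ᵥ w') - u ⬝ᵥ w) • e) = (u ⬝ᵥ w)/(v ⬝ᵥ w') := by
      simp [dotProduct_add, dotProduct_smul, he1, smul_eq_mul]
    have d2 : v ⬝ᵥ (w + ((u ⬝ᵥ w)/(v ⬝ᵥ w') - u ⬝ᵥ w) • e) = v ⬝ᵥ w := by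
      simp [dotProduct_add, dotProduct_smul, he2, smul_eq_mul]
    have d3 : u ⬝ᵥ (w' - (u ⬝ᵥ w') • e) = 0 := by
      simp [dotProduct_sub, dotProduct_smul, he1, smul_eq_mul]
    have d4 : v ⬝ᵥ (w' - (u ⬝ᵥ w') • e) = v ⬝ᵥ w' := by
      simp [dotProduct_sub, dotProduct_smul, he2, smul_eq_mul]
    rw [d1, d2, d3, d4]
    refine ⟨rfl, ?_, ?_⟩
    · funext j
      simp only [Pi.add_apply, Pi.smul_apply, smul_eq_mul]
      field_simp
      ring
    · funext j
      simp only [Pi.sub_apply, Pi.smul_apply, smul_eq_mul, zero_add]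
      have : (u ⬝ᵥ w) / (v ⬝ᵥ w') * (v ⬝ᵥ w) = - (u ⬝ᵥ w') := by
        field_simp
        linarith [h]
      rw [this]
      ring
  · push_neg at hp
    by_cases hq : v ⬝ᵥ w ≠ 0
    · refine ⟨1, w - (u ⬝ᵥ w) • e, w' + ((u ⬝ᵥ w')/(v ⬝ᵥ w) - u ⬝ᵥ w') • e,
        fun h0 => absurd h0 (by decide), fun _ => ?_, fun h2 => absurd h2 (by decide)⟩
      have d1 : u ⬝ᵥ (w - (u ⬝ᵥ w) • e) = 0 := by
        simp [dotProduct_sub, dotProduct_smul, he1, smul_eq_mul]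
      have d2 : v ⬝ᵥ (w - (u ⬝ᵥ w) • e) = v ⬝ᵥ w := by
        simp [dotProduct_sub, dotProduct_smul, he2, smul_eq_mul]
      have d3 : u ⬝ᵥ (w' + ((u ⬝ᵥ w')/(v ⬝ᵥ w) - u ⬝ᵥ w') • e) = (u ⬝ᵥ w')/(v ⬝ᵥ w) := by
        simp [dotProduct_add, dotProduct_smul, he1, smul_eq_mul]
      have d4 : v ⬝ᵥ (w' + ((u ⬝ᵥ w')/(v ⬝ᵥ w) - u ⬝ᵥ w') • e) = v ⬝ᵥ w' := by
        simp [dotProduct_add, dotProduct_smul, he2, smul_eq_mul]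
      rw [d1, d2, d3, d4]
      refine ⟨rfl, ?_, ?_⟩
      · funext j
        simp only [Pi.sub_apply, Pi.smul_apply, smul_eq_mul, zero_add]
        have : (u ⬝ᵥ w') / (v ⬝ᵥ w) * (v ⬝ᵥ w') = - (u ⬝ᵥ w) := by
          field_simp
          linarith [h]
        rw [this]
        ring
      · funext j
        simp only [Pi.add_apply, Pi.smul_apply, smul_eq_mul]
        field_simp
        ring
    · push_neg at hq
      exact ⟨2, w, w', fun h0 => absurd h0 (by decide), fun h1 => absurd h1 (by decide),
        fun _ => ⟨hq, rfl, rfl⟩⟩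

end gmap

lemma scalar_dep {lam t s : ℝ} (hl : lam ≠ 0) (h : t * (lam * t) + s * (lam * s) = 0) : t = 0 := by
  have h1 : lam * (t*t + s*s) = 0 := by ring_nf at h ⊢; linarith
  have h2 : t*t + s*s = 0 := by
    rcases mul_eq_zero.1 h1 with h'|h'
    · exact absurd h' hl
    · exact h'
  have ht : t*t = 0 := by nlinarith [mul_self_nonneg t, mul_self_nonneg s]
  exact mul_self_eq_zero.mp ht

/-- row-index map for the kernel subspaces, in the independent case. -/
def rhoF (N m : ℕ) (hNm : N = 2*m+1) (g : Fin m → Fin 3) : Fin (m+1) → Fin N := fun i =>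
  if h : i.val = 0 then ⟨0, by omega⟩
  else if g ⟨i.val - 1, by have := i.isLt; omega⟩ = 0 then
    ⟨2*(i.val-1)+2, by have := i.isLt; omega⟩
  else ⟨2*(i.val-1)+1, by have := i.isLt; omega⟩

lemma rhoF_inj {N m : ℕ} (hNm : N = 2*m+1) (g : Fin m → Fin 3) :
    Function.Injective (rhoF N m hNm g) := by
  intro i j h
  have h' := congrArg Fin.val h
  apply Fin.ext
  simp only [rhoF] at h'
  split_ifs at h' <;> simp only [] at h' <;> omega

/-- coefficient vectors for the kernel subspaces, in the independent case. -/
def cvF {N m : ℕ} (u v : Fin N → ℝ) (b : Bool) (g : Fin m → Fin 3) :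
    Fin (m+1) → (Fin N → ℝ) := fun i =>
  if h : i.val = 0 then (if b then u else v)
  else if g ⟨i.val - 1, by have := i.isLt; omega⟩ = 2 then v else u

lemma cvF_ne {N m : ℕ} {u v : Fin N → ℝ} (hu : u ≠ 0) (hv : v ≠ 0) (b : Bool)
    (g : Fin m → Fin 3) : ∀ i, cvF u v b g i ≠ 0 := by
  intro i
  unfold cvF
  split_ifs <;> assumption

lemma cvF_zero {N m : ℕ} (u v : Fin N → ℝ) (b : Bool) (g : Fin m → Fin 3)
    (i : Fin (m+1)) (hi : i.val = 0) : cvF u v b g i = (if b then u else v) := by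
  unfold cvF
  rw [dif_pos hi]

lemma cvF_succ {N m : ℕ} (u v : Fin N → ℝ) (b : Bool) (g : Fin m → Fin 3)
    (i : Fin (m+1)) (hi : ¬(i.val = 0)) (k : Fin m) (hk : k.val = i.val - 1) :
    cvF u v b g i = (if g k = 2 then v else u) := by
  unfold cvF
  rw [dif_neg hi]
  have h1 : (⟨i.val - 1, by have := i.isLt; omega⟩ : Fin m) = k := by
    apply Fin.ext
    show i.val - 1 = k.val
    omega
  rw [h1]

lemma rhoF_zero {N m : ℕ} (hNm : N = 2*m+1) (g : Fin m → Fin 3)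
    (i : Fin (m+1)) (hi : i.val = 0) : rhoF N m hNm g i = ⟨0, by omega⟩ := by
  unfold rhoF
  rw [dif_pos hi]

lemma rhoF_succ {N m : ℕ} (hNm : N = 2*m+1) (g : Fin m → Fin 3)
    (i : Fin (m+1)) (hi : ¬(i.val = 0)) (k : Fin m) (hk : k.val = i.val - 1) :
    rhoF N m hNm g i = (if g k = 0 then (⟨2*k.val+2, by have := k.isLt; omega⟩ : Fin N)
      else ⟨2*k.val+1, by have := k.isLt; omega⟩) := by
  unfold rhoF
  rw [dif_neg hi]
  have h1 : (⟨i.val - 1, by have := i.isLt; omega⟩ : Fin m) = k := by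
    apply Fin.ext
    show i.val - 1 = k.val
    omega
  rw [h1]
  split_ifs with h
  · simp only [Fin.mk.injEq]
    omega
  · simp only [Fin.mk.injEq]
    omega

/-- extension of a choice function to ℕ. -/
def cext {m : ℕ} (g : Fin m → Fin 3) : ℕ → Fin 3 := fun k =>
  if h : k < m then g ⟨k, h⟩ else 0

set_option maxHeartbeats 1000000

/-- For `N` odd and `x ≠ ±y` in `ℝ^N`, the set of `N × N` matrices `A`
(rows `A 0, …, A (N-1)`) with `P(x;A) = P(y;A)`, where
`P(x;A) = (⟪x,w₁⟫², ⟪x,w₂⟫² + ⟪x,w₃⟫², …, ⟪x,w_{N-1}⟫² + ⟪x,w_N⟫²)`,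
has dimension at most `N² - (N+1)/2`. -/
theorem stmt3 {N : ℕ} (hN : Odd N) (x y : Fin N → ℝ) (hxy : x ≠ y) (hxy' : x ≠ -y) :
    dimH {A : Fin N → Fin N → ℝ |
        (∀ h0 : 0 < N, (∑ j, x j * A ⟨0, h0⟩ j) ^ 2 = (∑ j, y j * A ⟨0, h0⟩ j) ^ 2) ∧
        ∀ k : ℕ, ∀ h : 2 * k + 2 < N,
          (∑ j, x j * A ⟨2 * k + 1, by omega⟩ j) ^ 2 + (∑ j, x j * A ⟨2 * k + 2, h⟩ j) ^ 2 =
          (∑ j, y j * A ⟨2 * k + 1, by omega⟩ j) ^ 2 + (∑ j, y j * A ⟨2 * k + 2, h⟩ j) ^ 2} ≤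
      ((N ^ 2 - (N + 1) / 2 : ℕ) : ℝ≥0∞) := by
  obtain ⟨m, hm⟩ := hN
  have hNm : N = 2*m+1 := by omega
  have hN2 : N % 2 = 1 := by omega
  have hN0 : 0 < N := by omega
  set u : Fin N → ℝ := x - y with hu
  set v : Fin N → ℝ := x + y with hv
  have hu0 : u ≠ 0 := sub_ne_zero.2 hxy
  have hv0 : v ≠ 0 := by
    intro h
    exact hxy' (eq_neg_of_add_eq_zero_left h)
  have hfr : finrank ℝ (Fin N → Fin N → ℝ) = N * N := by
    simp [Module.finrank_pi_fintype, Finset.sum_const, Finset.card_univ]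
  have hcastle : ((finrank ℝ (Fin N → Fin N → ℝ) - (m+1) : ℕ) : ℝ≥0∞)
      ≤ ((N ^ 2 - (N + 1) / 2 : ℕ) : ℝ≥0∞) := by
    rw [Nat.cast_le, hfr, pow_two]
    omega
  -- translation of membership conditions
  have key0 : ∀ w : Fin N → ℝ,
      (∑ j, x j * w j) ^ 2 = (∑ j, y j * w j) ^ 2 → (u ⬝ᵥ w) * (v ⬝ᵥ w) = 0 := by
    intro w hw
    have h1 : u ⬝ᵥ w = x ⬝ᵥ w - y ⬝ᵥ w := by rw [hu, sub_dotProduct]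
    have h2 : v ⬝ᵥ w = x ⬝ᵥ w + y ⬝ᵥ w := by rw [hv, add_dotProduct]
    have hxw : x ⬝ᵥ w = ∑ j, x j * w j := rfl
    have hyw : y ⬝ᵥ w = ∑ j, y j * w j := rfl
    rw [h1, h2, hxw, hyw]
    nlinarith [hw]
  have keyP : ∀ w w' : Fin N → ℝ,
      (∑ j, x j * w j) ^ 2 + (∑ j, x j * w' j) ^ 2
        = (∑ j, y j * w j) ^ 2 + (∑ j, y j * w' j) ^ 2 →
      (u ⬝ᵥ w) * (v ⬝ᵥ w) + (u ⬝ᵥ w') * (v ⬝ᵥ w') = 0 := by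
    intro w w' hw
    have h1 : u ⬝ᵥ w = x ⬝ᵥ w - y ⬝ᵥ w := by rw [hu, sub_dotProduct]
    have h2 : v ⬝ᵥ w = x ⬝ᵥ w + y ⬝ᵥ w := by rw [hv, add_dotProduct]
    have h3 : u ⬝ᵥ w' = x ⬝ᵥ w' - y ⬝ᵥ w' := by rw [hu, sub_dotProduct]
    have h4 : v ⬝ᵥ w' = x ⬝ᵥ w' + y ⬝ᵥ w' := by rw [hv, add_dotProduct]
    have hxw : x ⬝ᵥ w = ∑ j, x j * w j := rfl
    have hyw : y ⬝ᵥ w = ∑ j, y j * w j := rfl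
    have hxw' : x ⬝ᵥ w' = ∑ j, x j * w' j := rfl
    have hyw' : y ⬝ᵥ w' = ∑ j, y j * w' j := rfl
    rw [h1, h2, h3, h4, hxw, hyw, hxw', hyw']
    nlinarith [hw]
  by_cases hdep : ∃ lam : ℝ, v = lam • u
  · -- degenerate case : v is a multiple of u
    obtain ⟨lam, hlam⟩ := hdep
    have hlam0 : lam ≠ 0 := fun h => hv0 (by rw [hlam, h, zero_smul])
    have hvdot : ∀ w : Fin N → ℝ, v ⬝ᵥ w = lam * (u ⬝ᵥ w) := by
      intro w
      rw [hlam, smul_dotProduct, smul_eq_mul]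
    set cd : Fin (m+1) → (Fin N → ℝ) := fun _ => u with hcd
    set ρd : Fin (m+1) → Fin N := fun i =>
      if h : i.val = 0 then ⟨0, hN0⟩
      else ⟨2*(i.val-1)+1, by have := i.isLt; omega⟩ with hρd
    have hsub : {A : Fin N → Fin N → ℝ |
        (∀ h0 : 0 < N, (∑ j, x j * A ⟨0, h0⟩ j) ^ 2 = (∑ j, y j * A ⟨0, h0⟩ j) ^ 2) ∧
        ∀ k : ℕ, ∀ h : 2 * k + 2 < N,
          (∑ j, x j * A ⟨2 * k + 1, by omega⟩ j) ^ 2 + (∑ j, x j * A ⟨2 * k + 2, h⟩ j) ^ 2 =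
          (∑ j, y j * A ⟨2 * k + 1, by omega⟩ j) ^ 2 + (∑ j, y j * A ⟨2 * k + 2, h⟩ j) ^ 2}
        ⊆ ((LinearMap.ker (rowL cd ρd) : Submodule ℝ (Fin N → Fin N → ℝ)) : Set _) := by
      intro A hA
      rw [SetLike.mem_coe, LinearMap.mem_ker]
      funext i
      rw [rowL_apply]
      show u ⬝ᵥ A (ρd i) = (0 : Fin (m+1) → ℝ) i
      rw [Pi.zero_apply]
      by_cases hi : i.val = 0
      · have h0 := key0 _ (hA.1 hN0)
        rw [hvdot] at h0
        have := scalar_dep hlam0 (t := u ⬝ᵥ A ⟨0, hN0⟩) (s := 0) (by rw [h0]; ring)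
        simp only [hρd]
        rw [dif_pos hi]
        exact this
      · have hk := keyP _ _ (hA.2 (i.val - 1) (by have := i.isLt; omega))
        rw [hvdot, hvdot] at hk
        simp only [hρd]
        rw [dif_neg hi]
        exact scalar_dep hlam0 hk
    refine le_trans (dimH_mono hsub) (le_trans (dimH_ker_le _ ?_) hcastle)
    apply rowL_surjective (fun i => hu0)
    intro i j h
    have h' := congrArg Fin.val h
    apply Fin.ext
    simp only [hρd] at h'
    split_ifs at h' <;> simp only [] at h' <;> omega
  · -- independent case
    push_neg at hdep
    have hvv : v ⬝ᵥ v ≠ 0 := by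
      simpa [dotProduct_self_eq_zero] using hv0
    set f0 : Fin N → ℝ := u - ((v ⬝ᵥ u)/(v ⬝ᵥ v)) • v with hf0
    have hvf0 : v ⬝ᵥ f0 = 0 := by
      rw [hf0, dotProduct_sub, dotProduct_smul, smul_eq_mul]
      field_simp
      ring
    have hf00 : f0 ≠ 0 := by
      intro h0
      obtain ⟨c, huv⟩ : ∃ c : ℝ, u = c • v := by
        rw [hf0, sub_eq_zero] at h0
        exact ⟨_, h0⟩
      have hcc : c ≠ 0 := fun h => hu0 (by rw [huv, h, zero_smul])
      exact hdep c⁻¹ (by rw [huv, smul_smul, inv_mul_cancel₀ hcc, one_smul])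
    have huf0 : u ⬝ᵥ f0 ≠ 0 := by
      have hexp : u ⬝ᵥ f0 = f0 ⬝ᵥ f0 + ((v ⬝ᵥ u)/(v ⬝ᵥ v)) * (v ⬝ᵥ f0) := by
        nth_rewrite 1 [show u = f0 + ((v ⬝ᵥ u)/(v ⬝ᵥ v)) • v from by rw [hf0]; abel]
        rw [add_dotProduct, smul_dotProduct, smul_eq_mul]
      rw [hexp, hvf0, mul_zero, add_zero]
      simpa [dotProduct_self_eq_zero] using hf00
    set e : Fin N → ℝ := (u ⬝ᵥ f0)⁻¹ • f0 with he
    have he1 : u ⬝ᵥ e = 1 := by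
      rw [he, dotProduct_smul, smul_eq_mul]
      exact inv_mul_cancel₀ huf0
    have he2 : v ⬝ᵥ e = 0 := by
      rw [he, dotProduct_smul, smul_eq_mul, hvf0, mul_zero]
    -- covering by charts
    have hsub : {A : Fin N → Fin N → ℝ |
        (∀ h0 : 0 < N, (∑ j, x j * A ⟨0, h0⟩ j) ^ 2 = (∑ j, y j * A ⟨0, h0⟩ j) ^ 2) ∧
        ∀ k : ℕ, ∀ h : 2 * k + 2 < N,
          (∑ j, x j * A ⟨2 * k + 1, by omega⟩ j) ^ 2 + (∑ j, x j * A ⟨2 * k + 2, h⟩ j) ^ 2 =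
          (∑ j, y j * A ⟨2 * k + 1, by omega⟩ j) ^ 2 + (∑ j, y j * A ⟨2 * k + 2, h⟩ j) ^ 2}
        ⊆ ⋃ γ : Bool × (Fin m → Fin 3), Gmap hN2 u v e (cext γ.2) ''
          ((LinearMap.ker (rowL (cvF u v γ.1 γ.2) (rhoF N m hNm γ.2)) :
            Submodule ℝ (Fin N → Fin N → ℝ)) : Set _) := by
      intro A hA
      have trich : ∀ t : Fin 3, t = 0 ∨ t = 1 ∨ t = 2 := by decide
      have h0 := key0 _ (hA.1 hN0)
      have hpair : ∀ k : Fin m, ∃ ch : Fin 3, ∃ b b' : Fin N → ℝ,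
          (ch = 0 → u ⬝ᵥ b' = 0 ∧
            b + ((u ⬝ᵥ b) * (v ⬝ᵥ b' - 1)) • e = A ⟨2*k.val+1, by have := k.isLt; omega⟩ ∧
            b' - ((u ⬝ᵥ b') + (u ⬝ᵥ b) * (v ⬝ᵥ b)) • e = A ⟨2*k.val+2, by have := k.isLt; omega⟩) ∧
          (ch = 1 → u ⬝ᵥ b = 0 ∧
            b - ((u ⬝ᵥ b) + (u ⬝ᵥ b') * (v ⬝ᵥ b')) • e = A ⟨2*k.val+1, by have := k.isLt; omega⟩ ∧
            b' + ((u ⬝ᵥ b') * (v ⬝ᵥ b - 1)) • e = A ⟨2*k.val+2, by have := k.isLt; omega⟩) ∧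
          (ch = 2 → v ⬝ᵥ b = 0 ∧ b = A ⟨2*k.val+1, by have := k.isLt; omega⟩ ∧
            b' = A ⟨2*k.val+2, by have := k.isLt; omega⟩) := by
        intro k
        exact pair_cover u v e he1 he2 _ _
          (keyP _ _ (hA.2 k.val (by have := k.isLt; omega)))
      choose ch bf bf' hP0 hP1 hP2 using hpair
      have hb0 : ∃ bb : Bool, (if bb then u else v) ⬝ᵥ A ⟨0, hN0⟩ = 0 := by
        rcases mul_eq_zero.1 h0 with h|h
        · exact ⟨true, by simpa using h⟩
        · exact ⟨false, by simpa using h⟩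
      obtain ⟨bb, hbb⟩ := hb0
      obtain ⟨B, hBzero, hB1, hB2⟩ : ∃ B : Fin N → Fin N → ℝ,
          (∀ r : Fin N, r.val = 0 → B r = A r) ∧
          (∀ (k : Fin m) (r : Fin N), r.val = 2*k.val+1 → B r = bf k) ∧
          (∀ (k : Fin m) (r : Fin N), r.val = 2*k.val+2 → B r = bf' k) := by
        refine ⟨fun r =>
          if h0 : r.val = 0 then A r
          else if h1 : r.val % 2 = 1 then bf ⟨(r.val - 1)/2, by have := r.isLt; omega⟩
          else bf' ⟨(r.val - 1)/2, by have := r.isLt; omega⟩, ?_, ?_, ?_⟩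
        · intro r hr
          dsimp only
          rw [dif_pos hr]
        · intro k r hr
          dsimp only
          rw [dif_neg (by omega), dif_pos (by omega)]
          have hkk : ((⟨(r.val - 1)/2, by have := r.isLt; omega⟩ : Fin m)) = k := by
            apply Fin.ext
            show (r.val - 1)/2 = k.val
            omega
          rw [hkk]
        · intro k r hr
          dsimp only
          rw [dif_neg (by omega), dif_neg (by omega)]
          have hkk : ((⟨(r.val - 1)/2, by have := r.isLt; omega⟩ : Fin m)) = k := by
            apply Fin.ext
            show (r.val - 1)/2 = k.val
            omega
          rw [hkk]
      have hcext : ∀ k : Fin m, cext ch k.val = ch k := by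
        intro k
        unfold cext
        rw [dif_pos k.isLt]
      refine Set.mem_iUnion.2 ⟨(bb, ch), B, ?_, ?_⟩
      · -- kernel membership
        rw [SetLike.mem_coe, LinearMap.mem_ker]
        funext i
        rw [rowL_apply]
        show cvF u v bb ch i ⬝ᵥ B (rhoF N m hNm ch i) = (0 : Fin (m+1) → ℝ) i
        rw [Pi.zero_apply]
        by_cases hi : i.val = 0
        · rw [cvF_zero u v bb ch i hi, rhoF_zero hNm ch i hi, hBzero _ rfl]
          exact hbb
        · obtain ⟨k, hk⟩ : ∃ k : Fin m, k.val = i.val - 1 :=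
            ⟨⟨i.val - 1, by have := i.isLt; omega⟩, rfl⟩
          rw [cvF_succ u v bb ch i hi k hk, rhoF_succ hNm ch i hi k hk]
          rcases trich (ch k) with hck|hck|hck
          · rw [if_neg (show ¬(ch k = 2) by rw [hck]; decide), if_pos hck, hB2 k _ rfl]
            exact (hP0 k hck).1
          · rw [if_neg (show ¬(ch k = 2) by rw [hck]; decide),
              if_neg (show ¬(ch k = 0) by rw [hck]; decide), hB1 k _ rfl]
            exact (hP1 k hck).1
          · rw [if_pos hck, if_neg (show ¬(ch k = 0) by rw [hck]; decide), hB1 k _ rfl]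
            exact (hP2 k hck).1
      · -- Gmap B = A
        funext r
        by_cases hr0 : r.val = 0
        · rw [Gmap_zero hr0, hBzero r hr0]
        · obtain ⟨k, hkv⟩ : ∃ k : Fin m, k.val = (r.val - 1)/2 :=
            ⟨⟨(r.val - 1)/2, by have := r.isLt; omega⟩, rfl⟩
          have hk1 : 2*k.val+1 < N := by have := k.isLt; omega
          have hk2 : 2*k.val+2 < N := by have := k.isLt; omega
          have hr1v : (⟨2*k.val+1, hk1⟩ : Fin N).val = 2*k.val+1 := rfl
          have hr2v : (⟨2*k.val+2, hk2⟩ : Fin N).val = 2*k.val+2 := rfl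
          have hBr1 : B ⟨2*k.val+1, hk1⟩ = bf k := hB1 k _ hr1v
          have hBr2 : B ⟨2*k.val+2, hk2⟩ = bf' k := hB2 k _ hr2v
          have hG := Gmap_pair (hN := hN2) (u := u) (v := v) (e := e) (c := cext ch)
            (B := B) hr1v hr2v
          have hrr : r = ⟨2*k.val+1, hk1⟩ ∨ r = ⟨2*k.val+2, hk2⟩ := by
            have h : r.val = 2*k.val+1 ∨ r.val = 2*k.val+2 := by
              have := r.isLt
              omega
            rcases h with h|h
            · exact Or.inl (Fin.ext h)
            · exact Or.inr (Fin.ext h)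
          rcases hrr with hre|hre <;> rw [hre]
          · rcases trich (ch k) with hck|hck|hck
            · rw [(hG.1 ((hcext k).trans hck)).1, hBr1, hBr2]
              exact (hP0 k hck).2.1
            · rw [(hG.2.1 ((hcext k).trans hck)).1, hBr1, hBr2]
              exact (hP1 k hck).2.1
            · rw [(hG.2.2 ((hcext k).trans hck)).1, hBr1]
              exact (hP2 k hck).2.1
          · rcases trich (ch k) with hck|hck|hck
            · rw [(hG.1 ((hcext k).trans hck)).2, hBr1, hBr2]
              exact (hP0 k hck).2.2
            · rw [(hG.2.1 ((hcext k).trans hck)).2, hBr1, hBr2]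
              exact (hP1 k hck).2.2
            · rw [(hG.2.2 ((hcext k).trans hck)).2, hBr2]
              exact (hP2 k hck).2.2
    refine le_trans (dimH_mono hsub) ?_
    rw [dimH_iUnion]
    apply iSup_le
    intro γ
    refine le_trans (dimH_image_le_of_contDiff contDiff_Gmap _) ?_
    exact le_trans (dimH_ker_le _ (rowL_surjective (cvF_ne hu0 hv0 γ.1 γ.2)
      (rhoF_inj hNm γ.2))) hcastle
end
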